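/- Let d ≥ 2 be an integer, 1 < α < 2, 1 < p < ∞, and let p' = p/(p−1). Let ν > 0 satisfy ν p' < 1, and set γ := (1 − 1/α)(2/p). Then for all measurable b, u : ℝ^{d+1} → [0,∞], ‖P*_γ(b · u^{p−1})‖_{p'}^{p'} ≤ ∫_{ℝ^{d+1}} b^{1−νp'} u^{p} · P_γ[ (P*_γ(b^{1+νp}))^{1/(p−1)} ], where all integrals are understood in [0,∞] (Tonelli). -/

import Mathlib

open MeasureTheory ENNReal Set Filter

noncomputable section

/-- The spatial space `ℝ^d`. -/
abbrev Spc (d : ℕ) := EuclideanSpace ℝ (Fin d)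

/-- Parabolic cylinder `C_ρ(t,x) = {(s,y) : t ≤ s ≤ t + ρ^α, |y - x| ≤ ρ}`. -/
def cylP (d : ℕ) (α ρ t : ℝ) (x : Spc d) : Set (ℝ × Spc d) :=
  {p | t ≤ p.1 ∧ p.1 ≤ t + ρ ^ α ∧ dist p.2 x ≤ ρ}

/-- Average of `f` over the parabolic cylinder `C_ρ(t,x)`. -/
def cylAvg (d : ℕ) (α ρ t : ℝ) (x : Spc d) (f : ℝ × Spc d → ℝ≥0∞) : ℝ≥0∞ :=
  (volume (cylP d α ρ t x))⁻¹ * ∫⁻ p in cylP d α ρ t x, f p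

/-- Parabolic Morrey norm `‖v‖_{E_q}`. -/
def morreyE (d : ℕ) (α q : ℝ) (v : ℝ × Spc d → ℝ≥0∞) : ℝ≥0∞ :=
  ⨆ (ρ : ℝ) (_ : 0 < ρ) (t : ℝ) (x : Spc d),
    ENNReal.ofReal ρ * (cylAvg d α ρ t x (fun p => v p ^ q)) ^ (1 / q)

/-- Elliptic Morrey norm `‖w‖_{M_q}` on `ℝ^d`. -/
def morreyM (d : ℕ) (q : ℝ) (w : Spc d → ℝ≥0∞) : ℝ≥0∞ :=
  ⨆ (ρ : ℝ) (_ : 0 < ρ) (x : Spc d),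
    ENNReal.ofReal ρ *
      ((volume (Metric.closedBall x ρ))⁻¹ *
        ∫⁻ y in Metric.closedBall x ρ, w y ^ q) ^ (1 / q)

/-- Fractional (parabolic) maximal function `M_β f(t,x)`. -/
def maxFun (d : ℕ) (α β : ℝ) (f : ℝ × Spc d → ℝ≥0∞) (t : ℝ) (x : Spc d) : ℝ≥0∞ :=
  ⨆ (ρ : ℝ) (_ : 0 < ρ), ENNReal.ofReal (ρ ^ β) * cylAvg d α ρ t x f

/-- Uncentered parabolic maximal function `M̂ f(z)`, sup over all parabolic
cylinders containing `z`. -/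
def hatM (d : ℕ) (α : ℝ) (f : ℝ × Spc d → ℝ≥0∞) (z : ℝ × Spc d) : ℝ≥0∞ :=
  ⨆ (ρ : ℝ) (_ : 0 < ρ) (t : ℝ) (x : Spc d) (_ : z ∈ cylP d α ρ t x),
    cylAvg d α ρ t x f

/-- The kernel `p_γ(s,y) = 1_{s>0} s^{γ/2} min(|y|^{-d-α}, s^{-(d+α)/α})`. -/
def pKer (d : ℕ) (α γ : ℝ) (s : ℝ) (y : Spc d) : ℝ≥0∞ :=
  if 0 < s then
    (if s ^ (1 / α) ≤ ‖y‖ then ENNReal.ofReal (s ^ (γ / 2) * ‖y‖ ^ (-(d : ℝ) - α))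
     else ENNReal.ofReal (s ^ (γ / 2 - ((d : ℝ) + α) / α)))
  else 0

/-- `P_γ f(t,x) = ∫ p_γ(s,y) f(t+s, x+y) dy ds`. -/
def Pop (d : ℕ) (α γ : ℝ) (f : ℝ × Spc d → ℝ≥0∞) (t : ℝ) (x : Spc d) : ℝ≥0∞ :=
  ∫⁻ p : ℝ × Spc d, pKer d α γ p.1 p.2 * f (t + p.1, x + p.2)

/-- `P*_γ f(t,x) = ∫ p_γ(s,y) f(t-s, x+y) dy ds`. -/
def PopStar (d : ℕ) (α γ : ℝ) (f : ℝ × Spc d → ℝ≥0∞) (t : ℝ) (x : Spc d) : ℝ≥0∞ :=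
  ∫⁻ p : ℝ × Spc d, pKer d α γ p.1 p.2 * f (t - p.1, x + p.2)

/-! ### Auxiliary lemmas -/

lemma measurable_pKer (d : ℕ) (α γ : ℝ) :
    Measurable (fun q : ℝ × Spc d => pKer d α γ q.1 q.2) := by
  unfold pKer
  apply Measurable.ite (measurableSet_lt measurable_const measurable_fst)
  · apply Measurable.ite
    · exact measurableSet_le (measurable_fst.pow measurable_const) measurable_snd.norm
    · exact ((measurable_fst.pow measurable_const).mul
        (measurable_snd.norm.pow measurable_const)).ennreal_ofReal
    · exact (measurable_fst.pow measurable_const).ennreal_ofReal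
  · exact measurable_const

lemma pKer_neg (d : ℕ) (α γ s : ℝ) (y : Spc d) : pKer d α γ s (-y) = pKer d α γ s y := by
  simp [pKer, norm_neg]

lemma measurable_popStar (d : ℕ) (α γ : ℝ) {f : ℝ × Spc d → ℝ≥0∞} (hf : Measurable f) :
    Measurable fun z : ℝ × Spc d => PopStar d α γ f z.1 z.2 := by
  unfold PopStar
  apply Measurable.lintegral_prod_right'
    (f := fun zq : (ℝ × Spc d) × (ℝ × Spc d) =>
      pKer d α γ zq.2.1 zq.2.2 * f (zq.1.1 - zq.2.1, zq.1.2 + zq.2.2))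
  exact ((measurable_pKer d α γ).comp measurable_snd).mul
    (hf.comp ((measurable_fst.fst.sub measurable_snd.fst).prodMk
      (measurable_fst.snd.add measurable_snd.snd)))

/-- Adjointness `∫ P*f · g = ∫ f · Pg` (Tonelli + translation/reflection invariance). -/
lemma adjoint_PopStar (d : ℕ) (α γ : ℝ) (f g : ℝ × Spc d → ℝ≥0∞)
    (hf : Measurable f) (hg : Measurable g) :
    ∫⁻ z : ℝ × Spc d, PopStar d α γ f z.1 z.2 * g z
      = ∫⁻ z : ℝ × Spc d, f z * Pop d α γ g z.1 z.2 := by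
  have hK : Measurable (fun q : ℝ × Spc d => pKer d α γ q.1 q.2) := measurable_pKer d α γ
  have hT : Measurable fun zq : (ℝ × Spc d) × (ℝ × Spc d) =>
      ((zq.1.1 - zq.2.1 : ℝ), (zq.1.2 + zq.2.2 : Spc d)) :=
    (measurable_fst.fst.sub measurable_snd.fst).prodMk (measurable_fst.snd.add measurable_snd.snd)
  have hm1 : Measurable fun zq : (ℝ × Spc d) × (ℝ × Spc d) =>
      g zq.1 * (pKer d α γ zq.2.1 zq.2.2 * f (zq.1.1 - zq.2.1, zq.1.2 + zq.2.2)) :=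
    (hg.comp measurable_fst).mul ((hK.comp measurable_snd).mul (hf.comp hT))
  have hm2 : Measurable fun qz : (ℝ × Spc d) × (ℝ × Spc d) =>
      g (qz.2.1 + qz.1.1, qz.2.2 - qz.1.2) * (pKer d α γ qz.1.1 qz.1.2 * f qz.2) :=
    (hg.comp ((measurable_snd.fst.add measurable_fst.fst).prodMk
        (measurable_snd.snd.sub measurable_fst.snd))).mul
      ((hK.comp measurable_fst).mul (hf.comp measurable_snd))
  calc
    ∫⁻ z : ℝ × Spc d, PopStar d α γ f z.1 z.2 * g z
        = ∫⁻ z : ℝ × Spc d, ∫⁻ q : ℝ × Spc d,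
            g z * (pKer d α γ q.1 q.2 * f (z.1 - q.1, z.2 + q.2)) := by
          refine lintegral_congr fun z => ?_
          have hmsr : Measurable fun q : ℝ × Spc d =>
              pKer d α γ q.1 q.2 * f (z.1 - q.1, z.2 + q.2) :=
            hK.mul (hf.comp ((measurable_const.sub measurable_fst).prodMk
              (measurable_const.add measurable_snd)))
          rw [PopStar, mul_comm]
          exact (lintegral_const_mul (g z) hmsr).symm
    _ = ∫⁻ q : ℝ × Spc d, ∫⁻ z : ℝ × Spc d,
            g z * (pKer d α γ q.1 q.2 * f (z.1 - q.1, z.2 + q.2)) :=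
          lintegral_lintegral_swap hm1.aemeasurable
    _ = ∫⁻ q : ℝ × Spc d, ∫⁻ z : ℝ × Spc d,
            g (z.1 + q.1, z.2 - q.2) * (pKer d α γ q.1 q.2 * f z) := by
          refine lintegral_congr fun q => ?_
          have hmp : MeasurePreserving (fun z : ℝ × Spc d => z + (q.1, -q.2)) volume volume :=
            (measurePreserving_add_right volume q.1).prod (measurePreserving_add_right volume (-q.2))
          have hFm : Measurable fun z : ℝ × Spc d =>
              g z * (pKer d α γ q.1 q.2 * f (z.1 - q.1, z.2 + q.2)) :=
            hg.mul (measurable_const.mul (hf.comp ((measurable_fst.sub measurable_const).prodMk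
              (measurable_snd.add measurable_const))))
          rw [← hmp.lintegral_comp hFm]
          refine lintegral_congr fun z => ?_
          have hz : z + (q.1, -q.2) = (z.1 + q.1, z.2 - q.2) := by
            simp [Prod.ext_iff, sub_eq_add_neg]
          rw [hz]
          simp
    _ = ∫⁻ z : ℝ × Spc d, ∫⁻ q : ℝ × Spc d,
            g (z.1 + q.1, z.2 - q.2) * (pKer d α γ q.1 q.2 * f z) :=
          lintegral_lintegral_swap hm2.aemeasurable
    _ = ∫⁻ z : ℝ × Spc d, f z * ∫⁻ q : ℝ × Spc d,
            pKer d α γ q.1 q.2 * g (z.1 + q.1, z.2 - q.2) := by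
          refine lintegral_congr fun z => ?_
          have hmsr : Measurable fun q : ℝ × Spc d =>
              pKer d α γ q.1 q.2 * g (z.1 + q.1, z.2 - q.2) :=
            hK.mul (hg.comp ((measurable_const.add measurable_fst).prodMk
              (measurable_const.sub measurable_snd)))
          rw [← lintegral_const_mul (f z) hmsr]
          exact lintegral_congr fun q => by ring
    _ = ∫⁻ z : ℝ × Spc d, f z * Pop d α γ g z.1 z.2 := by
          refine lintegral_congr fun z => ?_
          congr 1
          rw [Pop]
          have hmp : MeasurePreserving (fun q : ℝ × Spc d => (q.1, -q.2)) volume volume :=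
            (MeasurePreserving.id _).prod (Measure.measurePreserving_neg _)
          have hGm : Measurable fun q : ℝ × Spc d =>
              pKer d α γ q.1 q.2 * g (z.1 + q.1, z.2 - q.2) :=
            hK.mul (hg.comp ((measurable_const.add measurable_fst).prodMk
              (measurable_const.sub measurable_snd)))
          rw [← hmp.lintegral_comp hGm]
          refine lintegral_congr fun q => ?_
          simp only [pKer_neg, sub_neg_eq_add]

/-- Pointwise splitting identity used in the Hölder step. -/
lemma hoelder_split (p ν : ℝ) (hp : 1 < p) (hν : 0 < ν) (hνp : ν * (p / (p - 1)) < 1)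
    (K B U : ℝ≥0∞) :
    K * (B * U ^ (p - 1)) =
      (K ^ (1 / p) * (B ^ (1 + ν * p)) ^ (1 / p)) *
      (K ^ (1 / (p / (p - 1))) *
        (B ^ (1 - ν * (p / (p - 1))) * U ^ p) ^ (1 / (p / (p - 1)))) := by
  have hp0 : (0:ℝ) < p := lt_trans one_pos hp
  have hp1 : (0:ℝ) < p - 1 := by linarith
  have hpc0 : (0:ℝ) < p / (p - 1) := div_pos hp0 hp1
  have h1 : (0:ℝ) ≤ 1 / p := by positivity
  have h2 : (0:ℝ) ≤ 1 / (p / (p - 1)) := by positivity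
  have ha : (0:ℝ) ≤ (1 + ν * p) * (1 / p) := by positivity
  have hc : (0:ℝ) ≤ (1 - ν * (p / (p - 1))) * (1 / (p / (p - 1))) := by
    apply mul_nonneg _ h2; linarith
  have e3 : p * (1 / (p / (p - 1))) = p - 1 := by field_simp
  have e2 : 1 / p + 1 / (p / (p - 1)) = 1 := by field_simp; ring
  have e1 : (1 + ν * p) * (1 / p) + (1 - ν * (p / (p - 1))) * (1 / (p / (p - 1))) = 1 := by
    field_simp; ring
  rw [ENNReal.mul_rpow_of_nonneg _ _ h2]
  simp only [← ENNReal.rpow_mul]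
  rw [e3]
  have hre : (K ^ (1 / p) * B ^ ((1 + ν * p) * (1 / p))) *
      (K ^ (1 / (p / (p - 1))) *
        (B ^ ((1 - ν * (p / (p - 1))) * (1 / (p / (p - 1)))) * U ^ (p - 1))) =
      (K ^ (1 / p) * K ^ (1 / (p / (p - 1)))) *
        ((B ^ ((1 + ν * p) * (1 / p)) *
          B ^ ((1 - ν * (p / (p - 1))) * (1 / (p / (p - 1))))) * U ^ (p - 1)) := by ring
  rw [hre, ← ENNReal.rpow_add_of_nonneg _ _ h1 h2, ← ENNReal.rpow_add_of_nonneg _ _ ha hc,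
    e2, e1, ENNReal.rpow_one, ENNReal.rpow_one]

lemma collapse (r : ℝ) (hr0 : 0 < r) (X Y : ℝ≥0∞) :
    (X ^ (1 / r) * Y ^ (1 / r)) ^ r = X * Y := by
  rw [ENNReal.mul_rpow_of_nonneg _ _ hr0.le, ← ENNReal.rpow_mul, ← ENNReal.rpow_mul,
    one_div_mul_cancel hr0.ne', ENNReal.rpow_one, ENNReal.rpow_one]

/-- the duality/Hölder step (inequality (PP)):
`‖P*_γ(b u^{p-1})‖_{p'}^{p'} ≤ ∫ b^{1-νp'} u^p P_γ[(P*_γ(b^{1+νp}))^{1/(p-1)}]`,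
where `γ = (1 - 1/α)(2/p)` and `p' = p/(p-1)`. -/
theorem stmt_17 (d : ℕ) (hd : 2 ≤ d) (α p ν : ℝ) (hα1 : 1 < α) (hα2 : α < 2)
    (hp : 1 < p) (hν : 0 < ν) (hνp : ν * (p / (p - 1)) < 1)
    (b u : ℝ × Spc d → ℝ≥0∞) (hb : Measurable b) (hu : Measurable u) :
    (∫⁻ z : ℝ × Spc d,
        (PopStar d α ((1 - 1 / α) * (2 / p)) (fun w => b w * u w ^ (p - 1)) z.1 z.2)
          ^ (p / (p - 1))) ≤
      ∫⁻ z : ℝ × Spc d,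
        b z ^ (1 - ν * (p / (p - 1))) * u z ^ p *
          Pop d α ((1 - 1 / α) * (2 / p))
            (fun w =>
              (PopStar d α ((1 - 1 / α) * (2 / p)) (fun w' => b w' ^ (1 + ν * p)) w.1 w.2)
                ^ (1 / (p - 1))) z.1 z.2 := by
  set γ := (1 - 1 / α) * (2 / p) with hγ
  have hp0 : (0:ℝ) < p := lt_trans one_pos hp
  have hp1 : (0:ℝ) < p - 1 := by linarith
  have hpc0 : (0:ℝ) < p / (p - 1) := div_pos hp0 hp1
  have hconj : p.HolderConjugate (p / (p - 1)) := Real.holderConjugate_iff.mpr ⟨hp, by field_simp; ring⟩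
  have hK : Measurable (fun q : ℝ × Spc d => pKer d α γ q.1 q.2) := measurable_pKer d α γ
  have hbp : Measurable fun w : ℝ × Spc d => b w ^ (1 + ν * p) := hb.pow measurable_const
  have hh : Measurable fun w : ℝ × Spc d => b w ^ (1 - ν * (p / (p - 1))) * u w ^ p :=
    (hb.pow measurable_const).mul (hu.pow measurable_const)
  -- pointwise Hölder
  have key : ∀ z : ℝ × Spc d,
      PopStar d α γ (fun w => b w * u w ^ (p - 1)) z.1 z.2 ≤
        (PopStar d α γ (fun w => b w ^ (1 + ν * p)) z.1 z.2) ^ (1 / p) *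
        (PopStar d α γ (fun w => b w ^ (1 - ν * (p / (p - 1))) * u w ^ p) z.1 z.2)
          ^ (1 / (p / (p - 1))) := by
    intro z
    have hT : Measurable fun q : ℝ × Spc d => ((z.1 - q.1 : ℝ), (z.2 + q.2 : Spc d)) :=
      (measurable_const.sub measurable_fst).prodMk (measurable_const.add measurable_snd)
    set f1 : ℝ × Spc d → ℝ≥0∞ := fun q =>
      pKer d α γ q.1 q.2 ^ (1 / p) * (b (z.1 - q.1, z.2 + q.2) ^ (1 + ν * p)) ^ (1 / p)
      with hf1def
    set f2 : ℝ × Spc d → ℝ≥0∞ := fun q =>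
      pKer d α γ q.1 q.2 ^ (1 / (p / (p - 1))) *
        (b (z.1 - q.1, z.2 + q.2) ^ (1 - ν * (p / (p - 1))) * u (z.1 - q.1, z.2 + q.2) ^ p)
          ^ (1 / (p / (p - 1))) with hf2def
    have hf1 : Measurable f1 := (hK.pow measurable_const).mul ((hbp.comp hT).pow measurable_const)
    have hf2 : Measurable f2 := (hK.pow measurable_const).mul ((hh.comp hT).pow measurable_const)
    calc
      PopStar d α γ (fun w => b w * u w ^ (p - 1)) z.1 z.2
          = ∫⁻ q : ℝ × Spc d, f1 q * f2 q := by
            rw [PopStar]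
            exact lintegral_congr fun q => hoelder_split p ν hp hν hνp _ _ _
      _ ≤ (∫⁻ q, f1 q ^ p) ^ (1 / p) * (∫⁻ q, f2 q ^ (p / (p - 1))) ^ (1 / (p / (p - 1))) := by
            simpa using ENNReal.lintegral_mul_le_Lp_mul_Lq volume hconj
              hf1.aemeasurable hf2.aemeasurable
      _ = (PopStar d α γ (fun w => b w ^ (1 + ν * p)) z.1 z.2) ^ (1 / p) *
            (PopStar d α γ (fun w => b w ^ (1 - ν * (p / (p - 1))) * u w ^ p) z.1 z.2)
              ^ (1 / (p / (p - 1))) := by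
            rw [PopStar, PopStar,
              show (∫⁻ q, f1 q ^ p) = ∫⁻ q : ℝ × Spc d,
                  pKer d α γ q.1 q.2 * b (z.1 - q.1, z.2 + q.2) ^ (1 + ν * p) from
                lintegral_congr fun q => collapse p hp0 _ _,
              show (∫⁻ q, f2 q ^ (p / (p - 1))) = ∫⁻ q : ℝ × Spc d,
                  pKer d α γ q.1 q.2 *
                    (b (z.1 - q.1, z.2 + q.2) ^ (1 - ν * (p / (p - 1))) *
                      u (z.1 - q.1, z.2 + q.2) ^ p) from
                lintegral_congr fun q => collapse (p / (p - 1)) hpc0 _ _]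
  -- integrate the pointwise bound
  have step2 :
      (∫⁻ z : ℝ × Spc d,
          (PopStar d α γ (fun w => b w * u w ^ (p - 1)) z.1 z.2) ^ (p / (p - 1))) ≤
        ∫⁻ z : ℝ × Spc d,
          (PopStar d α γ (fun w => b w ^ (1 - ν * (p / (p - 1))) * u w ^ p) z.1 z.2) *
            ((PopStar d α γ (fun w' => b w' ^ (1 + ν * p)) z.1 z.2) ^ (1 / (p - 1))) := by
    refine lintegral_mono fun z => ?_
    calc
      (PopStar d α γ (fun w => b w * u w ^ (p - 1)) z.1 z.2) ^ (p / (p - 1))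
          ≤ ((PopStar d α γ (fun w => b w ^ (1 + ν * p)) z.1 z.2) ^ (1 / p) *
              (PopStar d α γ (fun w => b w ^ (1 - ν * (p / (p - 1))) * u w ^ p) z.1 z.2)
                ^ (1 / (p / (p - 1)))) ^ (p / (p - 1)) :=
            ENNReal.rpow_le_rpow (key z) hpc0.le
      _ = (PopStar d α γ (fun w => b w ^ (1 - ν * (p / (p - 1))) * u w ^ p) z.1 z.2) *
            ((PopStar d α γ (fun w' => b w' ^ (1 + ν * p)) z.1 z.2) ^ (1 / (p - 1))) := by
            rw [ENNReal.mul_rpow_of_nonneg _ _ hpc0.le]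
            simp only [← ENNReal.rpow_mul]
            rw [show (1 / p) * (p / (p - 1)) = 1 / (p - 1) by field_simp,
              show (1 / (p / (p - 1))) * (p / (p - 1)) = 1 from
                one_div_mul_cancel hpc0.ne', ENNReal.rpow_one, mul_comm]
  -- adjointness
  have hG : Measurable fun w : ℝ × Spc d =>
      (PopStar d α γ (fun w' => b w' ^ (1 + ν * p)) w.1 w.2) ^ (1 / (p - 1)) :=
    (measurable_popStar d α γ hbp).pow measurable_const
  have step3 := adjoint_PopStar d α γ
    (fun w => b w ^ (1 - ν * (p / (p - 1))) * u w ^ p)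
    (fun w => (PopStar d α γ (fun w' => b w' ^ (1 + ν * p)) w.1 w.2) ^ (1 / (p - 1)))
    hh hG
  calc
    (∫⁻ z : ℝ × Spc d,
        (PopStar d α γ (fun w => b w * u w ^ (p - 1)) z.1 z.2) ^ (p / (p - 1)))
        ≤ _ := step2
    _ = ∫⁻ z : ℝ × Spc d,
          (b z ^ (1 - ν * (p / (p - 1))) * u z ^ p) *
            Pop d α γ (fun w =>
              (PopStar d α γ (fun w' => b w' ^ (1 + ν * p)) w.1 w.2) ^ (1 / (p - 1)))
              z.1 z.2 := step3
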